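/- Let n ≥ 1, let A ⊆ C with C \ A nonempty, and set m_q = max{ m_c : c ∈ C \ A }. Then the following are equivalent: (1) there is a completion T of P such that score(T,a) < m_q for every a ∈ A; (2) there exists an injective function f from the set { i ∈ {1,…,n} : Pᵢ is a necessary supporter of A } into A × {1,…,m_q − 1} such that for every necessary supporter index i, the first component of f(i) belongs to max(Pᵢ). -/

import Mathlib

/-- `c` is a maximal element of the partial order (relation) `Q` (where `Q a b` means
`b` is weakly preferred to `a`): no candidate `d ≠ c` is strictly above `c`. -/
def MaxIn {C : Type*} (Q : C → C → Prop) (c : C) : Prop := ∀ d, Q c d → d = c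

/-- `T` is a completion of the partial voting profile `P`: each `T i` is a linear
order extending the partial order `P i`.  (`T i a b` means `b` is weakly preferred
to `a` by voter `i`.) -/
def IsCompletion {C : Type*} {n : ℕ} (P T : Fin n → C → C → Prop) : Prop :=
  (∀ i, IsLinearOrder C (T i)) ∧ ∀ i a b, P i a b → T i a b

/-- The plurality score of `c`: the number of voters whose greatest (most preferred)
element is `c`. -/
noncomputable def pluralityScore {C : Type*} {n : ℕ} (T : Fin n → C → C → Prop) (c : C) : ℕ :=
  Nat.card {i : Fin n // ∀ d, T i d c}

/-- `m_c`: the number of indices `i` such that `c` is maximal in `P i`. -/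
noncomputable def maxCount {C : Type*} {n : ℕ} (P : Fin n → C → C → Prop) (c : C) : ℕ :=
  Nat.card {i : Fin n // MaxIn (P i) c}

/-- `c` is a plurality winner of `T`. -/
def IsPluralityWinner {C : Type*} {n : ℕ} (T : Fin n → C → C → Prop) (c : C) : Prop :=
  ∀ d, pluralityScore T d ≤ pluralityScore T c

/-- `P i` is a necessary supporter of `A`: every maximal element of `P i` lies in `A`. -/
def NecessarySupporter {C : Type*} {n : ℕ} (P : Fin n → C → C → Prop) (A : Set C)
    (i : Fin n) : Prop := ∀ c, MaxIn (P i) c → c ∈ A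

section helpers
variable {C : Type*}

/-- every linear order on a finite nonempty type has a top element -/
lemma exists_top [Fintype C] [Nonempty C] (r : C → C → Prop)
    (hr : IsLinearOrder C r) : ∃ c, ∀ d, r d c := by
  classical
  haveI := hr
  letI : LinearOrder C :=
  { le := r
    le_refl := fun a => refl_of r a
    le_trans := fun a b c => trans_of r
    le_antisymm := fun a b h h' => antisymm_of r h h'
    le_total := fun a b => total_of r a b
    toDecidableLE := fun a b => Classical.dec _ }
  obtain ⟨c, hc⟩ := Finite.exists_max (id : C → C)
  exact ⟨c, fun d => hc d⟩

/-- a partial order extends to a linear order with a given maximal element on top -/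
lemma exists_ext_top (P : C → C → Prop) (hP : IsPartialOrder C P)
    {c : C} (hc : MaxIn P c) :
    ∃ s, IsLinearOrder C s ∧ (∀ a b, P a b → s a b) ∧ ∀ d, s d c := by
  haveI := hP
  set R : C → C → Prop := fun a b => P a b ∨ b = c with hR
  haveI : IsRefl C R := ⟨fun a => Or.inl (refl_of P a)⟩
  haveI : IsTrans C R := ⟨by
    rintro a b e (hab | rfl) (hbe | rfl)
    · exact Or.inl (trans_of P hab hbe)
    · exact Or.inr rfl
    · exact Or.inr (hc e hbe)
    · exact Or.inr rfl⟩
  haveI : IsAntisymm C R := ⟨by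
    rintro a b (hab | rfl) (hba | rfl)
    · exact antisymm_of P hab hba
    · exact (hc b hab).symm
    · exact hc a hba
    · rfl⟩
  haveI : IsPartialOrder C R := { }
  obtain ⟨s, hs, hRs⟩ := extend_partialOrder R
  exact ⟨s, hs, fun a b h => hRs a b (Or.inl h), fun d => hRs d c (Or.inr rfl)⟩

/-- top of a linear extension is maximal in the partial order -/
lemma top_maxIn (P T : C → C → Prop) (hT : IsLinearOrder C T)
    (hext : ∀ a b, P a b → T a b) {c : C} (htop : ∀ d, T d c) : MaxIn P c := by
  haveI := hT
  intro d hd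
  exact antisymm_of T (htop d) (hext c d hd)

/-- every partial order on a finite nonempty type has a maximal element -/
lemma exists_maxIn [Fintype C] [Nonempty C] (P : C → C → Prop)
    (hP : IsPartialOrder C P) : ∃ c, MaxIn P c := by
  haveI := hP
  obtain ⟨s, hs, hPs⟩ := extend_partialOrder P
  obtain ⟨c, hc⟩ := exists_top s hs
  exact ⟨c, top_maxIn P s hs (fun a b h => hPs a b h) hc⟩

end helpers

/-- with `m_q = max{ m_c : c ∈ C \ A }`, there is a completion in which every
member of `A` scores below `m_q` iff there is an injective function `f` from the necessary
supporters of `A` into `A × {1,…,m_q − 1}` such that the first component of `f i` is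
maximal in `P i`. -/
theorem all_below_mq_iff_matching {C : Type*} [Fintype C] [Nonempty C] {n : ℕ}
    (hn : 1 ≤ n)
    (P : Fin n → C → C → Prop) (hP : ∀ i, IsPartialOrder C (P i))
    (A : Set C) (mq : ℕ)
    (hmq_mem : ∃ c ∉ A, maxCount P c = mq)
    (hmq_ub : ∀ c ∉ A, maxCount P c ≤ mq) :
    (∃ T, IsCompletion P T ∧ ∀ a ∈ A, pluralityScore T a < mq) ↔
    (∃ f : {i : Fin n // NecessarySupporter P A i} → {a : C // a ∈ A} × Fin (mq - 1),
      Function.Injective f ∧ ∀ i, MaxIn (P i.1) ((f i).1 : C)) := by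
  classical
  constructor
  · rintro ⟨T, ⟨hTlin, hText⟩, hscore⟩
    choose w hw using fun i => exists_top (T i) (hTlin i)
    have hwmax : ∀ i, MaxIn (P i) (w i) :=
      fun i => top_maxIn (P i) (T i) (hTlin i) (hText i) (hw i)
    have hwA : ∀ i, NecessarySupporter P A i → w i ∈ A := fun i h => h _ (hwmax i)
    -- fibers of w over A are small
    set s : C → Finset (Fin n) := fun a => Finset.univ.filter (fun i => w i = a) with hs
    have hcard : ∀ a ∈ A, (s a).card ≤ mq - 1 := by
      intro a ha
      have h1 : (s a).card ≤ pluralityScore T a := by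
        rw [pluralityScore, Nat.card_eq_fintype_card, Fintype.card_subtype]
        apply Finset.card_le_card
        intro i hi
        simp only [hs, Finset.mem_filter, Finset.mem_univ, true_and] at hi ⊢
        exact hi ▸ hw i
      have h2 := hscore a ha
      omega
    set F : Fin n → ℕ := fun i => ((s (w i)).sort (· ≤ ·)).idxOf i with hF
    have hFmem : ∀ i : Fin n, i ∈ (s (w i)).sort (· ≤ ·) := by
      intro i
      rw [Finset.mem_sort]
      simp [hs]
    have hFlt : ∀ i : Fin n, w i ∈ A → F i < mq - 1 := by
      intro i hi
      have h1 : F i < (s (w i)).card := by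
        rw [hF]
        simpa only [Finset.length_sort] using List.idxOf_lt_length_iff.2 (hFmem i)
      have := hcard _ hi
      omega
    refine ⟨fun i => (⟨w i.1, hwA i.1 i.2⟩, ⟨F i.1, hFlt i.1 (hwA i.1 i.2)⟩), ?_, ?_⟩
    · intro i j hij
      have h1 : w i.1 = w j.1 := congrArg (fun p => (p.1 : C)) hij
      have h2 : F i.1 = F j.1 := congrArg (fun p => (p.2 : ℕ)) hij
      have h3 : i.1 = j.1 := by
        have hmi := hFmem i.1
        have hmj := hFmem j.1
        rw [hF] at h2
        simp only at h2
        rw [h1] at hmi h2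
        exact (List.idxOf_inj hmi (y := j.1)).1 h2
      exact Subtype.ext h3
    · intro i
      exact hwmax i.1
  · rintro ⟨f, hfinj, hfmax⟩
    -- mq ≥ 1
    have hmq1 : 1 ≤ mq := by
      by_contra h
      have hmq0 : mq = 0 := by omega
      -- then every voter is a necessary supporter
      have hall : ∀ i : Fin n, NecessarySupporter P A i := by
        intro i c hc
        by_contra hcA
        have := hmq_ub c hcA
        have : 0 < maxCount P c := by
          rw [maxCount, Nat.card_pos_iff]
          exact ⟨⟨⟨i, hc⟩⟩, inferInstance⟩
        omega
      have i0 : {i : Fin n // NecessarySupporter P A i} :=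
        ⟨⟨0, hn⟩, hall _⟩
      have := (f i0).2
      rw [hmq0] at this
      exact absurd this.2 (by omega)
    -- choose a bad maximal element for non-supporters
    have hns : ∀ i, ¬NecessarySupporter P A i → ∃ c, MaxIn (P i) c ∧ c ∉ A := by
      intro i hi
      by_contra h
      push_neg at h
      exact hi (fun c hc => h c hc)
    choose ν hν1 hν2 using hns
    set t : Fin n → C := fun i =>
      if h : NecessarySupporter P A i then ((f ⟨i, h⟩).1 : C) else ν i h with ht
    have htmax : ∀ i, MaxIn (P i) (t i) := by
      intro i
      by_cases h : NecessarySupporter P A i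
      · simp only [ht, dif_pos h]; exact hfmax ⟨i, h⟩
      · simp only [ht, dif_neg h]; exact hν1 i h
    choose T hT1 hT2 hT3 using fun i => exists_ext_top (P i) (hP i) (htmax i)
    refine ⟨T, ⟨hT1, fun i => hT2 i⟩, ?_⟩
    intro a ha
    -- the top of T i is exactly t i
    have htop : ∀ i c, (∀ d, T i d c) ↔ t i = c := by
      intro i c
      constructor
      · intro h
        haveI := hT1 i
        exact antisymm_of (T i) (h (t i)) (hT3 i c)
      · rintro rfl; exact hT3 i
    have hcardeq : pluralityScore T a = Nat.card {i : Fin n // t i = a} := by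
      rw [pluralityScore]
      congr 1
      apply congrArg
      ext i
      exact htop i a
    -- everyone with top a is a supporter
    have hsup : ∀ i : Fin n, t i = a → NecessarySupporter P A i := by
      intro i hi
      by_contra h
      rw [ht] at hi
      simp only [dif_neg h] at hi
      exact hν2 i h (hi ▸ ha)
    have hfst : ∀ (i : Fin n) (hi : t i = a) , ((f ⟨i, hsup i hi⟩).1 : C) = a := by
      intro i hi
      have h := hsup i hi
      simp only [ht, dif_pos h] at hi
      exact hi
    have hinj : Function.Injective
        (fun x : {i : Fin n // t i = a} => (f ⟨x.1, hsup x.1 x.2⟩).2) := by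
      intro x y hxy
      have h1 : f ⟨x.1, hsup x.1 x.2⟩ = f ⟨y.1, hsup y.1 y.2⟩ := by
        apply Prod.ext
        · apply Subtype.ext
          rw [hfst x.1 x.2, hfst y.1 y.2]
        · exact hxy
      have h2 := hfinj h1
      have h3 : x.1 = y.1 := congrArg (Subtype.val : {i : Fin n // NecessarySupporter P A i} → Fin n) h2
      exact Subtype.ext h3
    have hle : Nat.card {i : Fin n // t i = a} ≤ mq - 1 := by
      have := Nat.card_le_card_of_injective _ hinj
      simpa using this
    omega
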